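/- In the infinite dihedral group D∞ = ⟨a, b | a² = b² = 1⟩ acting on the binary rooted tree as the self-similar group with a = (1,1)·s and b = (a,b), the Schreier graph of the stabiliser of any ray η ≠ g·1^ω (any ray not in the orbit of 1^ω) is isomorphic as a labelled graph to the bi-infinite line with edges alternately labelled a and b; equivalently, for such η, the orbit map n ↦ η·(ab)ⁿ together with η·(ab)ⁿa enumerates the orbit of η bijectively. -/

import Mathlib

/-- Prepending a letter to an infinite binary word. -/
def consWord {α : Type*} (c : α) (ξ : ℕ → α) : ℕ → α :=
  fun n => match n with
  | 0 => c
  | n + 1 => ξ n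

namespace Stmt14Aux

def tl (ξ : ℕ → Bool) : ℕ → Bool := fun n => ξ (n + 1)

lemma cons_eta (ξ : ℕ → Bool) : consWord (ξ 0) (tl ξ) = ξ := by
  funext n; cases n <;> rfl

lemma cons_zero (c : Bool) (t : ℕ → Bool) : consWord c t 0 = c := rfl
lemma cons_succ (c : Bool) (t : ℕ → Bool) (n : ℕ) : consWord c t (n+1) = t n := rfl

lemma cons_inj {c d : Bool} {u v : ℕ → Bool} (h : consWord c u = consWord d v) :
    c = d ∧ u = v := ⟨congrFun h 0, funext fun n => congrFun h (n+1)⟩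

variable {a b : Equiv.Perm (ℕ → Bool)}
variable (ha : ∀ (c : Bool) (ξ : ℕ → Bool), a (consWord c ξ) = consWord (!c) ξ)
variable (hb0 : ∀ ξ : ℕ → Bool, b (consWord false ξ) = consWord false (a ξ))
variable (hb1 : ∀ ξ : ℕ → Bool, b (consWord true ξ) = consWord true (b ξ))

include ha in
lemma a_apply (ξ : ℕ → Bool) : a ξ = consWord (!(ξ 0)) (tl ξ) := by
  conv_lhs => rw [← cons_eta ξ]
  rw [ha]

include ha in
lemma a_ne (ξ : ℕ → Bool) : a ξ ≠ ξ := by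
  intro h
  have := congrFun h 0
  rw [a_apply ha] at this
  simp [cons_zero] at this

include ha in
lemma a_sq (ξ : ℕ → Bool) : a (a ξ) = ξ := by
  conv_lhs => rw [← cons_eta ξ, ha, ha]
  simp [cons_eta]

include hb1 in
lemma b_one : b (fun _ => true) = fun _ => true := by
  have h1 : consWord true (fun _ => true) = (fun _ => true) := by
    funext n; cases n <;> rfl
  have h := hb1 (fun _ => true)
  rw [h1] at h
  -- h : b 1^ω = consWord true (b 1^ω)
  funext n
  induction n with
  | zero => exact congrFun h 0
  | succ n ih => rw [congrFun h (n+1), cons_succ, ih]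

include ha hb0 hb1 in
lemma b_sq (ξ : ℕ → Bool) : b (b ξ) = ξ := by
  by_cases hall : ∀ n, ξ n = true
  · have : ξ = fun _ => true := funext hall
    rw [this, b_one hb1, b_one hb1]
  · push_neg at hall
    obtain ⟨n, hn⟩ := hall
    replace hn : ξ n = false := by simpa using hn

    induction n generalizing ξ with
    | zero =>
      rw [← cons_eta ξ, hn, hb0, hb0, a_sq ha]
    | succ n ih =>
      rcases Bool.eq_false_or_eq_true (ξ 0) with h0 | h0
      · rw [← cons_eta ξ, h0, hb1, hb1, ih (tl ξ) hn]
      · rw [← cons_eta ξ, h0, hb0, hb0, a_sq ha]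

include ha hb0 hb1 in
lemma b_fix {ξ : ℕ → Bool} (h : b ξ = ξ) : ξ = fun _ => true := by
  by_cases hall : ∀ n, ξ n = true
  · exact funext hall
  · exfalso
    push_neg at hall
    obtain ⟨n, hn⟩ := hall
    replace hn : ξ n = false := by simpa using hn

    induction n generalizing ξ with
    | zero =>
      rw [← cons_eta ξ, hn] at h
      rw [hb0] at h
      have := (cons_inj h).2
      exact a_ne ha _ this
    | succ n ih =>
      rcases Bool.eq_false_or_eq_true (ξ 0) with h0 | h0
      · rw [← cons_eta ξ, h0, hb1] at h
        exact ih (cons_inj h).2 hn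
      · rw [← cons_eta ξ, h0, hb0] at h
        exact a_ne ha _ (cons_inj h).2

include ha hb0 in
lemma ab_false (t : ℕ → Bool) : (a*b) (consWord false t) = consWord true (a t) := by
  rw [Equiv.Perm.mul_apply, hb0, ha]; rfl

include ha hb1 in
lemma ab_true (t : ℕ → Bool) : (a*b) (consWord true t) = consWord false (b t) := by
  rw [Equiv.Perm.mul_apply, hb1, ha]; rfl

include ha hb1 in
lemma ba_false (t : ℕ → Bool) : (b*a) (consWord false t) = consWord true (b t) := by
  rw [Equiv.Perm.mul_apply, ha]
  exact hb1 t

include ha hb0 in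
lemma ba_true (t : ℕ → Bool) : (b*a) (consWord true t) = consWord false (a t) := by
  rw [Equiv.Perm.mul_apply, ha]
  exact hb0 t

include ha hb0 hb1 in
lemma sec (m : ℕ) : ∀ t : ℕ → Bool,
    ((a*b)^(2*m)) (consWord false t) = consWord false (((b*a)^m) t) ∧
    ((a*b)^(2*m)) (consWord true t) = consWord true (((a*b)^m) t) ∧
    ((b*a)^(2*m)) (consWord false t) = consWord false (((a*b)^m) t) ∧
    ((b*a)^(2*m)) (consWord true t) = consWord true (((b*a)^m) t) := by
  induction m with
  | zero => simp
  | succ m ih =>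
    intro t
    have e2 : 2*(m+1) = 2*m + 2 := by ring
    have epow : ∀ g : Equiv.Perm (ℕ → Bool), g^(2*(m+1)) = g^(2*m) * g^2 := by
      intro g; rw [e2, pow_add]
    refine ⟨?_, ?_, ?_, ?_⟩
    · rw [epow, Equiv.Perm.mul_apply, sq (a*b), Equiv.Perm.mul_apply,
        ab_false ha hb0, ab_true ha hb1]
      rw [← Equiv.Perm.mul_apply b a t, (ih ((b*a) t)).1, ← Equiv.Perm.mul_apply ((b*a)^m), ← pow_succ]
    · rw [epow, Equiv.Perm.mul_apply, sq (a*b), Equiv.Perm.mul_apply,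
        ab_true ha hb1, ab_false ha hb0]
      rw [← Equiv.Perm.mul_apply a b t, (ih ((a*b) t)).2.1, ← Equiv.Perm.mul_apply ((a*b)^m), ← pow_succ]
    · rw [epow, Equiv.Perm.mul_apply, sq (b*a), Equiv.Perm.mul_apply,
        ba_false ha hb1, ba_true ha hb0]
      rw [← Equiv.Perm.mul_apply a b t, (ih ((a*b) t)).2.2.1, ← Equiv.Perm.mul_apply ((a*b)^m), ← pow_succ]
    · rw [epow, Equiv.Perm.mul_apply, sq (b*a), Equiv.Perm.mul_apply,
        ba_true ha hb0, ba_false ha hb1]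
      rw [← Equiv.Perm.mul_apply b a t, (ih ((b*a) t)).2.2.2, ← Equiv.Perm.mul_apply ((b*a)^m), ← pow_succ]

include ha hb0 hb1 in
lemma ab_head (ξ : ℕ → Bool) : ((a*b) ξ) 0 = !(ξ 0) ∧ ((b*a) ξ) 0 = !(ξ 0) := by
  rcases Bool.eq_false_or_eq_true (ξ 0) with h | h
  · constructor
    · conv_lhs => rw [← cons_eta ξ, h, ab_true ha hb1]
      rw [h]; rfl
    · conv_lhs => rw [← cons_eta ξ, h, ba_true ha hb0]
      rw [h]; rfl
  · constructor
    · conv_lhs => rw [← cons_eta ξ, h, ab_false ha hb0]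
      rw [h]; rfl
    · conv_lhs => rw [← cons_eta ξ, h, ba_false ha hb1]
      rw [h]; rfl

include ha hb0 hb1 in
lemma head_even (m : ℕ) (ξ : ℕ → Bool) :
    (((a*b)^(2*m)) ξ) 0 = ξ 0 ∧ (((b*a)^(2*m)) ξ) 0 = ξ 0 := by
  rcases Bool.eq_false_or_eq_true (ξ 0) with h | h
  · constructor
    · conv_lhs => rw [← cons_eta ξ, h, (sec ha hb0 hb1 m (tl ξ)).2.1]
      rw [h]; rfl
    · conv_lhs => rw [← cons_eta ξ, h, (sec ha hb0 hb1 m (tl ξ)).2.2.2]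
      rw [h]; rfl
  · constructor
    · conv_lhs => rw [← cons_eta ξ, h, (sec ha hb0 hb1 m (tl ξ)).1]
      rw [h]; rfl
    · conv_lhs => rw [← cons_eta ξ, h, (sec ha hb0 hb1 m (tl ξ)).2.2.1]
      rw [h]; rfl

include ha hb0 hb1 in
lemma key : ∀ k : ℕ, 0 < k → ∀ ξ : ℕ → Bool, ((a*b)^k) ξ ≠ ξ ∧ ((b*a)^k) ξ ≠ ξ := by
  intro k
  induction k using Nat.strong_induction_on with
  | _ k ih =>
    intro hk ξ
    rcases Nat.even_or_odd k with ⟨m, hm⟩ | ⟨m, hm⟩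
    · -- even, k = m + m
      have hm2 : k = 2*m := by omega
      have hmpos : 0 < m := by omega
      have hmlt : m < k := by omega
      subst hm2
      constructor
      · intro h
        rcases Bool.eq_false_or_eq_true (ξ 0) with h0 | h0
        · rw [← cons_eta ξ, h0, (sec ha hb0 hb1 m (tl ξ)).2.1] at h
          exact (ih m hmlt hmpos (tl ξ)).1 (cons_inj h).2
        · rw [← cons_eta ξ, h0, (sec ha hb0 hb1 m (tl ξ)).1] at h
          exact (ih m hmlt hmpos (tl ξ)).2 (cons_inj h).2
      · intro h
        rcases Bool.eq_false_or_eq_true (ξ 0) with h0 | h0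
        · rw [← cons_eta ξ, h0, (sec ha hb0 hb1 m (tl ξ)).2.2.2] at h
          exact (ih m hmlt hmpos (tl ξ)).2 (cons_inj h).2
        · rw [← cons_eta ξ, h0, (sec ha hb0 hb1 m (tl ξ)).2.2.1] at h
          exact (ih m hmlt hmpos (tl ξ)).1 (cons_inj h).2
    · -- odd, k = 2*m+1
      subst hm
      constructor
      · intro h
        have h0 := congrFun h 0
        rw [pow_succ, Equiv.Perm.mul_apply, (head_even ha hb0 hb1 m ((a*b) ξ)).1,
          (ab_head ha hb0 hb1 ξ).1] at h0
        simp at h0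
      · intro h
        have h0 := congrFun h 0
        rw [pow_succ, Equiv.Perm.mul_apply, (head_even ha hb0 hb1 m ((b*a) ξ)).2,
          (ab_head ha hb0 hb1 ξ).2] at h0
        simp at h0

include ha hb0 hb1 in
lemma zkey_pos {n : ℤ} (hn : 0 < n) (ξ : ℕ → Bool) : ((a*b)^n) ξ ≠ ξ := by
  have hn' : n = (n.toNat : ℤ) := (Int.toNat_of_nonneg hn.le).symm
  rw [hn', zpow_natCast]
  exact (key ha hb0 hb1 n.toNat (by omega) ξ).1

include ha hb0 hb1 in
lemma zkey {n : ℤ} (hn : n ≠ 0) (ξ : ℕ → Bool) : ((a*b)^n) ξ ≠ ξ := by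
  intro h
  rcases lt_or_gt_of_ne hn with hneg | hpos
  · have h2 : ((a*b)^(-n)) ξ = ξ := by
      rw [zpow_neg]
      nth_rewrite 1 [← h]
      exact Equiv.symm_apply_apply _ _
    exact zkey_pos ha hb0 hb1 (by omega) ξ h2
  · exact zkey_pos ha hb0 hb1 hpos ξ h

include ha in
lemma ha2 : a * a = 1 := Equiv.ext fun ξ => by
  simp only [Equiv.Perm.mul_apply, Equiv.Perm.one_apply]; exact a_sq ha ξ

include ha hb0 hb1 in
lemma hb2 : b * b = 1 := Equiv.ext fun ξ => by
  simp only [Equiv.Perm.mul_apply, Equiv.Perm.one_apply]; exact b_sq ha hb0 hb1 ξ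

include ha in
lemma hainv : a⁻¹ = a := inv_eq_of_mul_eq_one_right (ha2 ha)

include ha hb0 hb1 in
lemma hbinv : b⁻¹ = b := inv_eq_of_mul_eq_one_right (hb2 ha hb0 hb1)

include ha hb0 hb1 in
lemma hconj (k : ℤ) : a * (a*b)^k * a = (a*b)^(-k) := by
  have h1 : (MulAut.conj a) (a*b) = (a*b)⁻¹ := by
    rw [MulAut.conj_apply, hainv ha, mul_inv_rev, hainv ha, hbinv ha hb0 hb1,
      ← mul_assoc a a b, ha2 ha, one_mul]
  have h2 := map_zpow (MulAut.conj a) (a*b) k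
  rw [h1] at h2
  rw [MulAut.conj_apply, hainv ha] at h2
  rw [h2, inv_zpow, zpow_neg]

include ha hb0 hb1 in
lemma hswap (k : ℤ) : (a*b)^k * a = a * (a*b)^(-k) := by
  have h := hconj ha hb0 hb1 (-k)
  rw [neg_neg] at h
  calc (a*b)^k * a = (a * (a*b)^(-k) * a) * a := by rw [h]
    _ = a * (a*b)^(-k) * (a * a) := by group
    _ = a * (a*b)^(-k) := by rw [ha2 ha, mul_one]

include ha hb0 hb1 in
lemma refl_fix (n : ℤ) (ξ : ℕ → Bool) (h : (a * (a*b)^n) ξ = ξ) :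
    ∃ k : ℤ, ((a*b)^k) ξ = (fun _ => true) := by
  rcases Int.even_or_odd n with ⟨k, hk⟩ | ⟨k, hk⟩
  · -- n = k + k : contradiction via a
    exfalso
    have e : (a*b)^k * (a * (a*b)^n) = a * (a*b)^k := by
      rw [← mul_assoc, hswap ha hb0 hb1 k, mul_assoc, ← zpow_add]
      congr 2
      omega
    have happ : ((a*b)^k * (a * (a*b)^n)) ξ = ((a*b)^k) ξ := by
      rw [Equiv.Perm.mul_apply, h]
    rw [e, Equiv.Perm.mul_apply] at happ
    exact a_ne ha _ happ
  · -- n = 2k+1 : b fixes (a*b)^k ξ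
    refine ⟨k, ?_⟩
    have e : (a*b)^k * (a * (a*b)^n) = b * (a*b)^k := by
      rw [← mul_assoc, hswap ha hb0 hb1 k, mul_assoc, ← zpow_add]
      have h' : -k + n = 1 + k := by omega
      rw [h', zpow_add, zpow_one, ← mul_assoc, ← mul_assoc, ha2 ha, one_mul]
    have happ : ((a*b)^k * (a * (a*b)^n)) ξ = ((a*b)^k) ξ := by
      rw [Equiv.Perm.mul_apply, h]
    rw [e, Equiv.Perm.mul_apply] at happ
    exact b_fix ha hb0 hb1 happ

include ha hb0 hb1 in
lemma pow_eq_inj {n m : ℤ} (ξ : ℕ → Bool) (h : ((a*b)^n) ξ = ((a*b)^m) ξ) : n = m := by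
  by_contra hne
  have h2 : ((a*b)^(-m+n)) ξ = ξ := by
    rw [zpow_add, Equiv.Perm.mul_apply, h, ← Equiv.Perm.mul_apply, ← zpow_add,
      neg_add_cancel, zpow_zero, Equiv.Perm.one_apply]
  exact zkey ha hb0 hb1 (by omega) ξ h2

include ha hb0 hb1 in
lemma closure_form {g : Equiv.Perm (ℕ → Bool)}
    (hg : g ∈ Subgroup.closure ({a, b} : Set (Equiv.Perm (ℕ → Bool)))) :
    ∃ n : ℤ, g = (a*b)^n ∨ g = a*(a*b)^n := by
  induction hg using Subgroup.closure_induction with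
  | mem x hx =>
    rcases hx with hx | hx
    · exact ⟨0, Or.inr (by rw [hx, zpow_zero, mul_one])⟩
    · refine ⟨1, Or.inr ?_⟩
      rw [hx, zpow_one, ← mul_assoc, ha2 ha, one_mul]
  | one => exact ⟨0, Or.inl (by rw [zpow_zero])⟩
  | mul x y hx hy ihx ihy =>
    obtain ⟨n, hn | hn⟩ := ihx <;> obtain ⟨m, hm | hm⟩ := ihy
    · exact ⟨n + m, Or.inl (by rw [hn, hm, zpow_add])⟩
    · refine ⟨-n + m, Or.inr ?_⟩
      rw [hn, hm, ← mul_assoc, hswap ha hb0 hb1 n, mul_assoc, ← zpow_add]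
    · exact ⟨n + m, Or.inr (by rw [hn, hm, mul_assoc, zpow_add])⟩
    · refine ⟨-n + m, Or.inl ?_⟩
      rw [hn, hm, ← mul_assoc, hconj ha hb0 hb1 n, ← zpow_add]
  | inv x hx ihx =>
    obtain ⟨n, hn | hn⟩ := ihx
    · exact ⟨-n, Or.inl (by rw [hn, zpow_neg])⟩
    · refine ⟨n, Or.inr ?_⟩
      rw [hn, mul_inv_rev, hainv ha, ← zpow_neg]
      have h' := hswap ha hb0 hb1 (-n)
      rw [neg_neg] at h'
      exact h'

end Stmt14Aux

open Stmt14Aux in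
/-- In the infinite dihedral group acting self-similarly on the binary tree
(`a` swaps the first letter, `b` is given by `(0ξ)·b = 0(ξ·a)`, `(1ξ)·b = 1(ξ·b)`),
for any ray `η` not in the orbit of `1^ω` the Schreier graph of `Stab(η)` is a bi-infinite
line: the map `(n, s) ↦ (a^[s] (ab)^n) η` (for `n ∈ ℤ`, `s ∈ Bool`) is injective with
range exactly the orbit of `η` under `⟨a, b⟩`. -/
theorem stmt14 (a b : Equiv.Perm (ℕ → Bool))
    (ha : ∀ (c : Bool) (ξ : ℕ → Bool), a (consWord c ξ) = consWord (!c) ξ)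
    (hb0 : ∀ ξ : ℕ → Bool, b (consWord false ξ) = consWord false (a ξ))
    (hb1 : ∀ ξ : ℕ → Bool, b (consWord true ξ) = consWord true (b ξ))
    (η : ℕ → Bool)
    (hη : ¬ ∃ g ∈ Subgroup.closure ({a, b} : Set (Equiv.Perm (ℕ → Bool))),
      g (fun _ => true) = η) :
    Function.Injective (fun p : ℤ × Bool =>
      ((if p.2 then a * (a * b) ^ p.1 else (a * b) ^ p.1) : Equiv.Perm (ℕ → Bool)) η) ∧
    Set.range (fun p : ℤ × Bool =>
      ((if p.2 then a * (a * b) ^ p.1 else (a * b) ^ p.1) : Equiv.Perm (ℕ → Bool)) η) =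
      {ξ | ∃ g ∈ Subgroup.closure ({a, b} : Set (Equiv.Perm (ℕ → Bool))), g η = ξ} := by
  have ha_mem : a ∈ Subgroup.closure ({a, b} : Set (Equiv.Perm (ℕ → Bool))) :=
    Subgroup.subset_closure (Set.mem_insert _ _)
  have hb_mem : b ∈ Subgroup.closure ({a, b} : Set (Equiv.Perm (ℕ → Bool))) :=
    Subgroup.subset_closure (Set.mem_insert_of_mem _ rfl)
  have hab_mem : a * b ∈ Subgroup.closure ({a, b} : Set (Equiv.Perm (ℕ → Bool))) :=
    mul_mem ha_mem hb_mem
  -- a mixed equality gives a contradiction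
  have mixed : ∀ n m : ℤ, ((a*b)^n) η = (a * (a*b)^m) η → False := by
    intro n m h
    have e : (a*b)^(-n) * (a * (a*b)^m) = a * (a*b)^(n+m) := by
      rw [← mul_assoc, hswap ha hb0 hb1 (-n), neg_neg, mul_assoc, ← zpow_add]
    have hfix : (a * (a*b)^(n+m)) η = η := by
      rw [← e, Equiv.Perm.mul_apply, ← h, ← Equiv.Perm.mul_apply, ← zpow_add,
        neg_add_cancel, zpow_zero, Equiv.Perm.one_apply]
    obtain ⟨k, hk⟩ := refl_fix ha hb0 hb1 (n+m) η hfix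
    refine hη ⟨(a*b)^(-k), zpow_mem hab_mem _, ?_⟩
    rw [← hk, ← Equiv.Perm.mul_apply, ← zpow_add, neg_add_cancel, zpow_zero,
      Equiv.Perm.one_apply]
  constructor
  · rintro ⟨n, s⟩ ⟨m, t⟩ h
    simp only at h
    cases s <;> cases t <;> simp only [Bool.false_eq_true, if_false, if_true,
      Bool.true_eq_false] at h
    · obtain rfl : n = m := pow_eq_inj ha hb0 hb1 η h
      rfl
    · exact absurd h (fun h => mixed n m h)
    · exact absurd h.symm (fun h => mixed m n h)
    · rw [Equiv.Perm.mul_apply, Equiv.Perm.mul_apply] at h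
      obtain rfl : n = m := pow_eq_inj ha hb0 hb1 η (a.injective h)
      rfl
  · ext ξ
    constructor
    · rintro ⟨⟨n, s⟩, rfl⟩
      cases s
      · exact ⟨(a*b)^n, zpow_mem hab_mem n, by simp⟩
      · exact ⟨a * (a*b)^n, mul_mem ha_mem (zpow_mem hab_mem n), by simp⟩
    · rintro ⟨g, hg, rfl⟩
      obtain ⟨n, hn | hn⟩ := closure_form ha hb0 hb1 hg
      · exact ⟨(n, false), by simp [hn]⟩
      · exact ⟨(n, true), by simp [hn]⟩
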